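/- Let C be a cyclic code of length n = p^k over R = F[u]/⟨u⁴⟩ with i-th torsional degrees t_i (0 ≤ i ≤ 3). Then there exist integers k_1, …, k_6 ≥ 0 and elements p_1(x), …, p_6(x) of S, each of which is either zero or a unit of F[x]/⟨xⁿ − 1⟩ lifted to S, such that C is generated as an ideal of S by the four polynomials g_0(x) = (x−1)^{t_0} + u(x−1)^{k_1}p_1(x) + u²(x−1)^{k_2}p_2(x) + u³(x−1)^{k_3}p_3(x), g_1(x) = u(x−1)^{t_1} + u²(x−1)^{k_4}p_4(x) + u³(x−1)^{k_5}p_5(x), g_2(x) = u²(x−1)^{t_2} + u³(x−1)^{k_6}p_6(x), and g_3(x) = u³(x−1)^{t_3}, where whenever p_1 ≠ 0 one has k_1 < t_1, whenever p_2 ≠ 0 or p_4 ≠ 0 one has k_2 < t_2 resp. k_4 < t_2, and whenever p_3 ≠ 0, p_5 ≠ 0 or p_6 ≠ 0 one has k_3 < t_3, k_5 < t_3 resp. k_6 < t_3. -/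

import Mathlib

open Polynomial
open scoped Classical

noncomputable section

/-- The ring `R = F[u]/⟨u⁴⟩`. -/
abbrev Rq (F : Type) [Field F] : Type :=
  Polynomial F ⧸ Ideal.span ({X ^ 4} : Set (Polynomial F))

instance instCommRingRq (F : Type) [Field F] : CommRing (Rq F) :=
  Ideal.Quotient.commRing _

/-- The ring `S = R[x]/⟨xⁿ − 1⟩`. -/
abbrev Sq (F : Type) [Field F] (n : ℕ) : Type :=
  Polynomial (Rq F) ⧸ Ideal.span ({X ^ n - 1} : Set (Polynomial (Rq F)))

/-- The ring `Q = F[x]/⟨xⁿ − 1⟩`. -/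
abbrev Qq (F : Type) [Field F] (n : ℕ) : Type :=
  Polynomial F ⧸ Ideal.span ({X ^ n - 1} : Set (Polynomial F))

/-- The element `u` of `R`. -/
def uu (F : Type) [Field F] : Rq F := Ideal.Quotient.mk _ X

/-- The element `u` of `S`. -/
def uS (F : Type) [Field F] (n : ℕ) : Sq F n := Ideal.Quotient.mk _ (C (uu F))

/-- The element `x` of `S`. -/
def xS (F : Type) [Field F] (n : ℕ) : Sq F n := Ideal.Quotient.mk _ X

/-- The element `x` of `Q`. -/
def xQ (F : Type) [Field F] (n : ℕ) : Qq F n := Ideal.Quotient.mk _ X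

/-- Reduction `R → F` modulo `u`. -/
def resHom (F : Type) [Field F] : Rq F →+* F :=
  Ideal.Quotient.lift _ (evalRingHom 0) (by
    intro a ha
    rw [Ideal.mem_span_singleton] at ha
    obtain ⟨c, rfl⟩ := ha
    simp)

/-- Reduction `μ : S → Q` modulo `u`. -/
def muHom (F : Type) [Field F] (n : ℕ) : Sq F n →+* Qq F n :=
  Ideal.Quotient.lift _ ((Ideal.Quotient.mk _).comp (mapRingHom (resHom F))) (by
    intro a ha
    rw [Ideal.mem_span_singleton] at ha
    obtain ⟨c, rfl⟩ := ha
    rw [RingHom.comp_apply, map_mul, Ideal.Quotient.eq_zero_iff_mem]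
    apply Ideal.mul_mem_right
    have h : (mapRingHom (resHom F)) (X ^ n - 1 : Polynomial (Rq F))
        = (X ^ n - 1 : Polynomial F) := by simp
    rw [h]
    exact Ideal.subset_span rfl)

/-- The natural lift `Q → S` (sending `a ∈ F` to itself and `x ↦ x`). -/
def liftQS (F : Type) [Field F] (n : ℕ) : Qq F n →+* Sq F n :=
  Ideal.Quotient.lift _
    ((Ideal.Quotient.mk _).comp
      (mapRingHom ((Ideal.Quotient.mk _).comp (C : F →+* Polynomial F)))) (by
    intro a ha
    rw [Ideal.mem_span_singleton] at ha
    obtain ⟨c, rfl⟩ := ha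
    rw [RingHom.comp_apply, map_mul, Ideal.Quotient.eq_zero_iff_mem]
    apply Ideal.mul_mem_right
    have h : (mapRingHom ((Ideal.Quotient.mk (Ideal.span ({X ^ 4} : Set (Polynomial F)))).comp
        (C : F →+* Polynomial F))) (X ^ n - 1 : Polynomial F)
        = (X ^ n - 1 : Polynomial (Rq F)) := by simp
    rw [h]
    exact Ideal.subset_span rfl)

/-- The `i`-th torsion code `Tor_i(C) = {μ(g) : uⁱ·g ∈ C}`, as a subset of `Q`. -/
def TorSet (F : Type) [Field F] (n : ℕ) (i : ℕ) (Cc : Ideal (Sq F n)) : Set (Qq F n) :=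
  { a | ∃ g : Sq F n, (uS F n) ^ i * g ∈ Cc ∧ muHom F n g = a }

/-- The code `C` has `i`-th torsional degree `t`, i.e. `Tor_i(C) = ⟨(x−1)^t⟩` with `0 ≤ t ≤ n`. -/
def HasTorDeg (F : Type) [Field F] (n : ℕ) (i : ℕ) (Cc : Ideal (Sq F n)) (t : ℕ) : Prop :=
  t ≤ n ∧ TorSet F n i Cc = ↑(Ideal.span {(xQ F n - 1) ^ t})

/-- An element of `S` that is the lift of a unit of `Q = F[x]/⟨xⁿ−1⟩`. -/
def IsUnitLift (F : Type) [Field F] (n : ℕ) (a : Sq F n) : Prop :=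
  ∃ q : Qq F n, IsUnit q ∧ a = liftQS F n q

/-- An element of `S` that is zero or the lift of a unit of `Q = F[x]/⟨xⁿ−1⟩`. -/
def UnitOrZeroLift (F : Type) [Field F] (n : ℕ) (a : Sq F n) : Prop :=
  a = 0 ∨ IsUnitLift F n a

section Aux

variable (F : Type) [Field F] (n : ℕ)

lemma resHom_mk (f : Polynomial F) :
    resHom F (Ideal.Quotient.mk _ f) = f.eval 0 := by
  simp [resHom]

lemma mu_mk (f : Polynomial (Rq F)) :
    muHom F n (Ideal.Quotient.mk _ f) = Ideal.Quotient.mk _ (f.map (resHom F)) := by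
  simp [muHom]

lemma lift_mk' (f : Polynomial F) :
    liftQS F n (Ideal.Quotient.mk _ f)
      = Ideal.Quotient.mk _ (f.map ((Ideal.Quotient.mk _).comp (C : F →+* Polynomial F))) := by
  simp [liftQS]

lemma mu_lift (q : Qq F n) : muHom F n (liftQS F n q) = q := by
  obtain ⟨f, rfl⟩ := Ideal.Quotient.mk_surjective q
  rw [lift_mk', mu_mk, Polynomial.map_map]
  congr 1
  have : (resHom F).comp ((Ideal.Quotient.mk
      (Ideal.span ({X ^ 4} : Set (Polynomial F)))).comp (C : F →+* Polynomial F))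
      = RingHom.id F := by
    ext a
    simp [resHom_mk]
  rw [this, Polynomial.map_id]

lemma uS_pow_four : uS F n ^ 4 = 0 := by
  have huu : uu F ^ 4 = 0 := by
    have : (uu F) ^ 4 = Ideal.Quotient.mk _ ((X : Polynomial F) ^ 4) := by
      rw [uu, ← map_pow]
    rw [this, Ideal.Quotient.eq_zero_iff_mem]
    exact Ideal.subset_span rfl
  have : uS F n ^ 4 = Ideal.Quotient.mk _ ((C (uu F)) ^ 4 : Polynomial (Rq F)) := by
    rw [uS, ← map_pow]
  rw [this, ← C_pow, huu, map_zero, map_zero]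

lemma mu_uS : muHom F n (uS F n) = 0 := by
  rw [uS, mu_mk]
  have : (C (uu F)).map (resHom F) = C (resHom F (uu F)) := by simp
  rw [this]
  have : resHom F (uu F) = 0 := by
    rw [uu, resHom_mk]; simp
  rw [this, map_zero, map_zero]

lemma split (a : Sq F n) : ∃ b, a = liftQS F n (muHom F n a) + uS F n * b := by
  obtain ⟨f, rfl⟩ := Ideal.Quotient.mk_surjective a
  rw [mu_mk, lift_mk', Polynomial.map_map]
  set σ : F →+* Rq F := (Ideal.Quotient.mk _).comp (C : F →+* Polynomial F) with hσ
  have hdvd : (C (uu F) : Polynomial (Rq F)) ∣ f - f.map (σ.comp (resHom F)) := by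
    rw [Polynomial.C_dvd_iff_dvd_coeff]
    intro i
    rw [Polynomial.coeff_sub, Polynomial.coeff_map]
    obtain ⟨g, hg⟩ := Ideal.Quotient.mk_surjective (f.coeff i)
    rw [← hg]
    have h1 : (σ.comp (resHom F)) (Ideal.Quotient.mk _ g) = Ideal.Quotient.mk _ (C (g.eval 0)) := by
      rw [RingHom.comp_apply, resHom_mk, hσ, RingHom.comp_apply]
    rw [h1]
    have : Ideal.Quotient.mk (Ideal.span ({X ^ 4} : Set (Polynomial F))) g -
        Ideal.Quotient.mk _ (C (g.eval 0)) = Ideal.Quotient.mk _ (g - C (g.eval 0)) := by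
      rw [map_sub]
    rw [this, uu]
    apply _root_.map_dvd
    rw [Polynomial.X_dvd_iff, Polynomial.coeff_sub, Polynomial.coeff_C]
    simp [Polynomial.coeff_zero_eq_eval_zero]
  obtain ⟨d, hd⟩ := hdvd
  refine ⟨Ideal.Quotient.mk _ d, ?_⟩
  have : f = f.map (σ.comp (resHom F)) + C (uu F) * d := by
    rw [← hd]; ring
  calc Ideal.Quotient.mk _ f
      = Ideal.Quotient.mk _ (f.map (σ.comp (resHom F)) + C (uu F) * d) := by rw [← this]
    _ = _ := by rw [map_add, map_mul, uS]

end Aux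
section Aux2

variable (F : Type) [Field F] (n : ℕ)

lemma lift_xQ : liftQS F n (xQ F n) = xS F n := by
  rw [xQ, lift_mk', Polynomial.map_X, xS]

lemma lift_x1pow (j : ℕ) (v : Qq F n) :
    liftQS F n ((xQ F n - 1) ^ j * v) = (xS F n - 1) ^ j * liftQS F n v := by
  rw [map_mul, map_pow, map_sub, map_one, lift_xQ]

lemma uoz_zero : UnitOrZeroLift F n 0 := Or.inl rfl

lemma uoz_mul {a b : Sq F n} (ha : UnitOrZeroLift F n a) (hb : UnitOrZeroLift F n b) :
    UnitOrZeroLift F n (a * b) := by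
  rcases ha with rfl | ⟨q, hq, rfl⟩
  · exact Or.inl (by show (0 : Sq F n) * b = 0; exact zero_mul b)
  rcases hb with rfl | ⟨q', hq', rfl⟩
  · exact Or.inl (by show liftQS F n q * (0 : Sq F n) = 0; exact mul_zero (liftQS F n q))
  exact Or.inr ⟨q * q', hq.mul hq', (map_mul _ _ _).symm⟩

lemma uoz_neg {a : Sq F n} (ha : UnitOrZeroLift F n a) : UnitOrZeroLift F n (-a) := by
  rcases ha with rfl | ⟨q, hq, rfl⟩
  · exact Or.inl neg_zero
  exact Or.inr ⟨-q, hq.neg, (map_neg _ _).symm⟩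

/-- chain structure of `Q` when `X^n - 1 = (X-1)^n`. -/
lemma qq_struct (hch : ((X : Polynomial F) - C 1) ^ n = X ^ n - 1) (q : Qq F n) :
    q = 0 ∨ ∃ (j : ℕ) (v : Qq F n), IsUnit v ∧ q = (xQ F n - 1) ^ j * v := by
  obtain ⟨f, rfl⟩ := Ideal.Quotient.mk_surjective q
  by_cases hf : f = 0
  · left; rw [hf, map_zero]
  right
  obtain ⟨g, hfg, hgnd⟩ := f.exists_eq_pow_rootMultiplicity_mul_and_not_dvd hf 1
  refine ⟨f.rootMultiplicity 1, Ideal.Quotient.mk _ g, ?_, ?_⟩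
  · have hirr : Irreducible ((X : Polynomial F) - C 1) := Polynomial.irreducible_X_sub_C 1
    have hcop : IsCoprime (((X : Polynomial F) - C 1) ^ n) g :=
      (hirr.coprime_iff_not_dvd.2 hgnd).pow_left
    obtain ⟨a, b, hab⟩ := hcop
    have h0 : Ideal.Quotient.mk (Ideal.span ({X ^ n - 1} : Set (Polynomial F)))
        (((X : Polynomial F) - C 1) ^ n) = 0 := by
      rw [hch, Ideal.Quotient.eq_zero_iff_mem]
      exact Ideal.subset_span rfl
    have := congrArg (Ideal.Quotient.mk (Ideal.span ({X ^ n - 1} : Set (Polynomial F)))) hab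
    rw [map_add, map_mul, map_mul, h0, mul_zero, zero_add, map_one, mul_comm] at this
    exact IsUnit.of_mul_eq_one _ this
  · have hx1 : Ideal.Quotient.mk (Ideal.span ({X ^ n - 1} : Set (Polynomial F)))
        ((X : Polynomial F) - C 1) = xQ F n - 1 := by
      rw [map_sub]; simp [xQ]
    conv_lhs => rw [hfg]
    rw [map_mul, map_pow, hx1]

end Aux2
section Aux3

variable (F : Type) [Field F] (n : ℕ)

lemma decompU (hch : ((X : Polynomial F) - C 1) ^ n = X ^ n - 1) (i : ℕ) (s : Sq F n) :
    ∃ (j : ℕ) (pp b : Sq F n), UnitOrZeroLift F n pp ∧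
      uS F n ^ i * s = uS F n ^ i * (xS F n - 1) ^ j * pp + uS F n ^ (i + 1) * b := by
  obtain ⟨b, hb⟩ := split F n s
  rcases qq_struct F n hch (muHom F n s) with h0 | ⟨j, v, hv, hq⟩
  · refine ⟨0, 0, b, uoz_zero F n, ?_⟩
    rw [hb, h0, map_zero, zero_add]
    ring
  · refine ⟨j, liftQS F n v, b, Or.inr ⟨v, hv, rfl⟩, ?_⟩
    rw [hb, hq, lift_x1pow]
    ring

lemma redL (i t : ℕ) (G r : Sq F n)
    (hG : G = uS F n ^ i * (xS F n - 1) ^ t + uS F n ^ (i + 1) * r)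
    (j : ℕ) (pp : Sq F n) (hpp : UnitOrZeroLift F n pp) :
    ∃ (j' : ℕ) (pp' c w : Sq F n), UnitOrZeroLift F n pp' ∧ (pp' ≠ 0 → j' < t) ∧
      uS F n ^ i * (xS F n - 1) ^ j * pp
        = uS F n ^ i * (xS F n - 1) ^ j' * pp' + c * G + uS F n ^ (i + 1) * w := by
  by_cases hj : j < t
  · exact ⟨j, pp, 0, 0, hpp, fun _ => hj, by ring⟩
  · refine ⟨0, 0, (xS F n - 1) ^ (j - t) * pp, -((xS F n - 1) ^ (j - t) * pp * r),
      uoz_zero F n, by simp, ?_⟩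
    have hpow : (xS F n - 1) ^ (j - t) * (xS F n - 1) ^ t = (xS F n - 1) ^ j := by
      rw [← pow_add, Nat.sub_add_cancel (le_of_not_gt hj)]
    rw [hG]
    linear_combination (-(uS F n ^ i * pp)) * hpow

lemma tor_exists (i t : ℕ) (Cc : Ideal (Sq F n)) (h : HasTorDeg F n i Cc t) :
    ∃ g, uS F n ^ i * g ∈ Cc ∧ muHom F n g = (xQ F n - 1) ^ t := by
  have : (xQ F n - 1) ^ t ∈ TorSet F n i Cc := by
    rw [h.2]
    exact Ideal.subset_span rfl
  exact this

lemma tor_mem' (i t : ℕ) (Cc : Ideal (Sq F n)) (h : HasTorDeg F n i Cc t)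
    (g : Sq F n) (hg : uS F n ^ i * g ∈ Cc) :
    ∃ q, muHom F n g = q * (xQ F n - 1) ^ t := by
  have hmem : muHom F n g ∈ TorSet F n i Cc := ⟨g, hg, rfl⟩
  rw [h.2] at hmem
  obtain ⟨a, ha⟩ := Ideal.mem_span_singleton'.1 hmem
  exact ⟨a, ha.symm⟩

end Aux3
section Aux4

variable (F : Type) [Field F] (n : ℕ)

lemma span_eq (Cc : Ideal (Sq F n)) (t₀ t₁ t₂ t₃ : ℕ)
    (h0 : HasTorDeg F n 0 Cc t₀) (h1 : HasTorDeg F n 1 Cc t₁)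
    (h2 : HasTorDeg F n 2 Cc t₂) (h3 : HasTorDeg F n 3 Cc t₃)
    (G₀ G₁ G₂ G₃ h₁ h₂ : Sq F n)
    (hG₀C : G₀ ∈ Cc) (hμ0 : muHom F n G₀ = (xQ F n - 1) ^ t₀)
    (hG₁C : G₁ ∈ Cc) (hG₁ : G₁ = uS F n * h₁) (hμ1 : muHom F n h₁ = (xQ F n - 1) ^ t₁)
    (hG₂C : G₂ ∈ Cc) (hG₂ : G₂ = uS F n ^ 2 * h₂) (hμ2 : muHom F n h₂ = (xQ F n - 1) ^ t₂)
    (hG₃C : G₃ ∈ Cc) (hG₃ : G₃ = uS F n ^ 3 * liftQS F n ((xQ F n - 1) ^ t₃)) :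
    Cc = Ideal.span {G₀, G₁, G₂, G₃} := by
  apply le_antisymm
  · intro c hc
    obtain ⟨q₀, hq₀⟩ := tor_mem' F n 0 t₀ Cc h0 c (by rwa [pow_zero, one_mul])
    have he₁C : c - liftQS F n q₀ * G₀ ∈ Cc := Ideal.sub_mem _ hc (Ideal.mul_mem_left _ _ hG₀C)
    obtain ⟨c₁, hc₁⟩ : ∃ c₁, c - liftQS F n q₀ * G₀ = uS F n * c₁ := by
      obtain ⟨c₁, h⟩ := split F n (c - liftQS F n q₀ * G₀)
      refine ⟨c₁, ?_⟩
      rwa [map_sub, map_mul, mu_lift, hμ0, hq₀, sub_self, map_zero, zero_add] at h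
    have hc₁C : uS F n ^ 1 * c₁ ∈ Cc := by rw [pow_one, ← hc₁]; exact he₁C
    obtain ⟨q₁, hq₁⟩ := tor_mem' F n 1 t₁ Cc h1 c₁ hc₁C
    have he₂C : c - liftQS F n q₀ * G₀ - liftQS F n q₁ * G₁ ∈ Cc :=
      Ideal.sub_mem _ he₁C (Ideal.mul_mem_left _ _ hG₁C)
    obtain ⟨c₂, hc₂⟩ : ∃ c₂, c - liftQS F n q₀ * G₀ - liftQS F n q₁ * G₁ = uS F n ^ 2 * c₂ := by
      obtain ⟨c₂, h⟩ := split F n (c₁ - liftQS F n q₁ * h₁)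
      rw [map_sub, map_mul, mu_lift, hμ1, hq₁, sub_self, map_zero, zero_add] at h
      refine ⟨c₂, ?_⟩
      rw [hc₁, hG₁]
      linear_combination uS F n * h
    have hc₂C : uS F n ^ 2 * c₂ ∈ Cc := hc₂ ▸ he₂C
    obtain ⟨q₂, hq₂⟩ := tor_mem' F n 2 t₂ Cc h2 c₂ hc₂C
    have he₃C : c - liftQS F n q₀ * G₀ - liftQS F n q₁ * G₁ - liftQS F n q₂ * G₂ ∈ Cc :=
      Ideal.sub_mem _ he₂C (Ideal.mul_mem_left _ _ hG₂C)
    obtain ⟨c₃, hc₃⟩ : ∃ c₃,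
        c - liftQS F n q₀ * G₀ - liftQS F n q₁ * G₁ - liftQS F n q₂ * G₂ = uS F n ^ 3 * c₃ := by
      obtain ⟨c₃, h⟩ := split F n (c₂ - liftQS F n q₂ * h₂)
      rw [map_sub, map_mul, mu_lift, hμ2, hq₂, sub_self, map_zero, zero_add] at h
      refine ⟨c₃, ?_⟩
      rw [hc₂, hG₂]
      linear_combination uS F n ^ 2 * h
    have hc₃C : uS F n ^ 3 * c₃ ∈ Cc := hc₃ ▸ he₃C
    obtain ⟨q₃, hq₃⟩ := tor_mem' F n 3 t₃ Cc h3 c₃ hc₃C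
    obtain ⟨b, hb⟩ := split F n c₃
    have hkey : c = liftQS F n q₀ * G₀ + liftQS F n q₁ * G₁ + liftQS F n q₂ * G₂
        + liftQS F n q₃ * G₃ := by
      have h4 : uS F n ^ 4 = 0 := uS_pow_four F n
      rw [hb, hq₃] at hc₃
      rw [hG₃]
      rw [map_mul] at hc₃
      linear_combination hc₃ + b * h4
    rw [hkey]
    have m0 : G₀ ∈ Ideal.span ({G₀, G₁, G₂, G₃} : Set (Sq F n)) := Ideal.subset_span (by simp)
    have m1 : G₁ ∈ Ideal.span ({G₀, G₁, G₂, G₃} : Set (Sq F n)) := Ideal.subset_span (by simp)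
    have m2 : G₂ ∈ Ideal.span ({G₀, G₁, G₂, G₃} : Set (Sq F n)) := Ideal.subset_span (by simp)
    have m3 : G₃ ∈ Ideal.span ({G₀, G₁, G₂, G₃} : Set (Sq F n)) := Ideal.subset_span (by simp)
    exact add_mem (add_mem (add_mem (Ideal.mul_mem_left _ _ m0) (Ideal.mul_mem_left _ _ m1))
      (Ideal.mul_mem_left _ _ m2)) (Ideal.mul_mem_left _ _ m3)
  · rw [Ideal.span_le]
    rintro x hx
    simp only [Set.mem_insert_iff, Set.mem_singleton_iff] at hx
    rcases hx with rfl | rfl | rfl | rfl <;> assumption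

end Aux4
section Aux5

variable (F : Type) [Field F] (n : ℕ)

lemma mu_xS : muHom F n (xS F n) = xQ F n := by
  rw [xS, mu_mk, Polynomial.map_X, xQ]

lemma mu_x1pow (j : ℕ) : muHom F n ((xS F n - 1) ^ j) = (xQ F n - 1) ^ j := by
  rw [map_pow, map_sub, map_one, mu_xS]

lemma lift_x1pow' (j : ℕ) : liftQS F n ((xQ F n - 1) ^ j) = (xS F n - 1) ^ j := by
  rw [map_pow, map_sub, map_one, lift_xQ]

end Aux5
set_option maxHeartbeats 4000000 in
/-- `C` is generated by four polynomials `g₀, g₁, g₂, g₃` of the displayed shape. -/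
theorem stmt_2 (p m k : ℕ) (hp : Nat.Prime p) (hm : 1 ≤ m) (hk : 1 ≤ k)
    (F : Type) [Field F] [Fintype F] (hF : Fintype.card F = p ^ m)
    (C : Ideal (Sq F (p ^ k))) (t₀ t₁ t₂ t₃ : ℕ)
    (h0 : HasTorDeg F (p ^ k) 0 C t₀) (h1 : HasTorDeg F (p ^ k) 1 C t₁)
    (h2 : HasTorDeg F (p ^ k) 2 C t₂) (h3 : HasTorDeg F (p ^ k) 3 C t₃) :
    ∃ (k₁ k₂ k₃ k₄ k₅ k₆ : ℕ) (p₁ p₂ p₃ p₄ p₅ p₆ : Sq F (p ^ k)),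
      UnitOrZeroLift F (p ^ k) p₁ ∧ UnitOrZeroLift F (p ^ k) p₂ ∧
      UnitOrZeroLift F (p ^ k) p₃ ∧ UnitOrZeroLift F (p ^ k) p₄ ∧
      UnitOrZeroLift F (p ^ k) p₅ ∧ UnitOrZeroLift F (p ^ k) p₆ ∧
      (p₁ ≠ 0 → k₁ < t₁) ∧
      (p₂ ≠ 0 → k₂ < t₂) ∧ (p₄ ≠ 0 → k₄ < t₂) ∧
      (p₃ ≠ 0 → k₃ < t₃) ∧ (p₅ ≠ 0 → k₅ < t₃) ∧ (p₆ ≠ 0 → k₆ < t₃) ∧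
      C = Ideal.span
        { (xS F (p ^ k) - 1) ^ t₀ + uS F (p ^ k) * (xS F (p ^ k) - 1) ^ k₁ * p₁
            + uS F (p ^ k) ^ 2 * (xS F (p ^ k) - 1) ^ k₂ * p₂
            + uS F (p ^ k) ^ 3 * (xS F (p ^ k) - 1) ^ k₃ * p₃,
          uS F (p ^ k) * (xS F (p ^ k) - 1) ^ t₁
            + uS F (p ^ k) ^ 2 * (xS F (p ^ k) - 1) ^ k₄ * p₄
            + uS F (p ^ k) ^ 3 * (xS F (p ^ k) - 1) ^ k₅ * p₅,
          uS F (p ^ k) ^ 2 * (xS F (p ^ k) - 1) ^ t₂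
            + uS F (p ^ k) ^ 3 * (xS F (p ^ k) - 1) ^ k₆ * p₆,
          uS F (p ^ k) ^ 3 * (xS F (p ^ k) - 1) ^ t₃ } := by
  -- characteristic
  haveI hfp : Fact p.Prime := ⟨hp⟩
  haveI hcF : CharP F p := by
    have hr := ringChar.charP F
    have hrp : (ringChar F).Prime := CharP.char_is_prime F (ringChar F)
    have h1 : (((p ^ m : ℕ)) : F) = 0 := by
      rw [← hF]; exact FiniteField.cast_card_eq_zero F
    have hdvd : ringChar F ∣ p ^ m :=
      (CharP.cast_eq_zero_iff F (ringChar F) (p ^ m)).1 h1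
    have heq : ringChar F = p := (Nat.prime_dvd_prime_iff_eq hrp hp).1 (hrp.dvd_of_dvd_pow hdvd)
    rwa [heq] at hr
  have hch : ((X : Polynomial F) - Polynomial.C 1) ^ (p ^ k) = X ^ (p ^ k) - 1 := by
    have h := sub_pow_char_pow (R := Polynomial F) (p := p) (n := k)
      (x := (X : Polynomial F)) (y := 1)
    rw [one_pow] at h
    rw [Polynomial.C_1]
    exact h
  have h4 : uS F (p ^ k) ^ 4 = 0 := uS_pow_four F (p ^ k)
  -- G₃
  obtain ⟨g₃, hg₃C, hμg₃⟩ := tor_exists F (p ^ k) 3 t₃ C h3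
  have hG₃eq : uS F (p ^ k) ^ 3 * g₃ = uS F (p ^ k) ^ 3 * (xS F (p ^ k) - 1) ^ t₃ := by
    obtain ⟨b, hb⟩ := split F (p ^ k) g₃
    rw [hμg₃, lift_x1pow'] at hb
    rw [hb]
    linear_combination b * h4
  have hG₃C : uS F (p ^ k) ^ 3 * (xS F (p ^ k) - 1) ^ t₃ ∈ C := hG₃eq ▸ hg₃C
  set G₃ := uS F (p ^ k) ^ 3 * (xS F (p ^ k) - 1) ^ t₃ with hG₃def
  -- G₂
  obtain ⟨A₂, hA₂C, hμA₂⟩ := tor_exists F (p ^ k) 2 t₂ C h2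
  obtain ⟨b₂, hb₂⟩ := split F (p ^ k) A₂
  rw [hμA₂, lift_x1pow'] at hb₂
  obtain ⟨a₆, q₆, b₂', hq₆, hd₆⟩ := decompU F (p ^ k) hch 3 b₂
  obtain ⟨k₆, p₆, c₆, w₆, hp₆, hk₆, hr₆⟩ :=
    redL F (p ^ k) 3 t₃ G₃ 0 (by rw [hG₃def]; ring) a₆ q₆ hq₆
  set G₂ := uS F (p ^ k) ^ 2 * (xS F (p ^ k) - 1) ^ t₂ + uS F (p ^ k) ^ 3 * (xS F (p ^ k) - 1) ^ k₆ * p₆ with hG₂def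
  have hG₂eq : uS F (p ^ k) ^ 2 * A₂ = G₂ + c₆ * G₃ := by
    rw [hG₂def]
    linear_combination (uS F (p ^ k) ^ 2) * hb₂ + hd₆ + hr₆ + (b₂' + w₆) * h4
  have hG₂C : G₂ ∈ C := by
    have : G₂ = uS F (p ^ k) ^ 2 * A₂ - c₆ * G₃ := by linear_combination -hG₂eq
    rw [this]
    exact Ideal.sub_mem _ hA₂C (Ideal.mul_mem_left _ _ hG₃C)
  set H₂ := (xS F (p ^ k) - 1) ^ t₂ + uS F (p ^ k) * (xS F (p ^ k) - 1) ^ k₆ * p₆ with hH₂def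
  have hG₂H : G₂ = uS F (p ^ k) ^ 2 * H₂ := by rw [hG₂def, hH₂def]; ring
  have hμH₂ : muHom F (p ^ k) H₂ = (xQ F (p ^ k) - 1) ^ t₂ := by
    rw [hH₂def, map_add, map_mul, map_mul, mu_uS, mu_x1pow]
    ring
  -- G₁
  obtain ⟨A₁, hA₁C, hμA₁⟩ := tor_exists F (p ^ k) 1 t₁ C h1
  obtain ⟨b₁, hb₁⟩ := split F (p ^ k) A₁
  rw [hμA₁, lift_x1pow'] at hb₁
  obtain ⟨a₄, q₄, b₁', hq₄', hd₄⟩ := decompU F (p ^ k) hch 2 b₁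
  obtain ⟨k₄, p₄, c₄, w₄, hp₄, hk₄, hr₄⟩ :=
    redL F (p ^ k) 2 t₂ G₂ ((xS F (p ^ k) - 1) ^ k₆ * p₆) (by rw [hG₂def]; ring) a₄ q₄ hq₄'
  obtain ⟨a₅, q₅, b₅, hq₅', hd₅⟩ := decompU F (p ^ k) hch 3 (b₁' + w₄)
  obtain ⟨k₅, p₅, c₅, w₅, hp₅, hk₅, hr₅⟩ :=
    redL F (p ^ k) 3 t₃ G₃ 0 (by rw [hG₃def]; ring) a₅ q₅ hq₅'
  set G₁ := uS F (p ^ k) * (xS F (p ^ k) - 1) ^ t₁ + uS F (p ^ k) ^ 2 * (xS F (p ^ k) - 1) ^ k₄ * p₄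
      + uS F (p ^ k) ^ 3 * (xS F (p ^ k) - 1) ^ k₅ * p₅ with hG₁def
  have hG₁eq : uS F (p ^ k) ^ 1 * A₁ = G₁ + c₄ * G₂ + c₅ * G₃ := by
    rw [hG₁def]
    linear_combination (uS F (p ^ k)) * hb₁ + hd₄ + hr₄ + hd₅ + hr₅ + (b₅ + w₅) * h4
  have hG₁C : G₁ ∈ C := by
    have : G₁ = uS F (p ^ k) ^ 1 * A₁ - c₄ * G₂ - c₅ * G₃ := by linear_combination -hG₁eq
    rw [this]
    exact Ideal.sub_mem _ (Ideal.sub_mem _ hA₁C (Ideal.mul_mem_left _ _ hG₂C))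
      (Ideal.mul_mem_left _ _ hG₃C)
  set H₁ := (xS F (p ^ k) - 1) ^ t₁ + uS F (p ^ k) * (xS F (p ^ k) - 1) ^ k₄ * p₄
      + uS F (p ^ k) ^ 2 * (xS F (p ^ k) - 1) ^ k₅ * p₅ with hH₁def
  have hG₁H : G₁ = uS F (p ^ k) * H₁ := by rw [hG₁def, hH₁def]; ring
  have hμH₁ : muHom F (p ^ k) H₁ = (xQ F (p ^ k) - 1) ^ t₁ := by
    rw [hH₁def]
    simp only [map_add, map_mul, map_pow, map_sub, map_one, mu_uS, mu_xS, zero_mul, mul_zero,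
      add_zero]
    norm_num
  -- G₀
  obtain ⟨A₀, hA₀C', hμA₀⟩ := tor_exists F (p ^ k) 0 t₀ C h0
  have hA₀C : A₀ ∈ C := by rwa [pow_zero, one_mul] at hA₀C'
  obtain ⟨b₀, hb₀⟩ := split F (p ^ k) A₀
  rw [hμA₀, lift_x1pow'] at hb₀
  obtain ⟨a₁, q₁, b₀', hq₁', hd₁⟩ := decompU F (p ^ k) hch 1 b₀
  obtain ⟨k₁, p₁, c₁, w₁, hp₁, hk₁, hr₁⟩ :=
    redL F (p ^ k) 1 t₁ G₁ ((xS F (p ^ k) - 1) ^ k₄ * p₄ + uS F (p ^ k) * (xS F (p ^ k) - 1) ^ k₅ * p₅)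
      (by rw [hG₁def]; ring) a₁ q₁ hq₁'
  obtain ⟨a₂, q₂, b₀'', hq₂', hd₂⟩ := decompU F (p ^ k) hch 2 (b₀' + w₁)
  obtain ⟨k₂, p₂, c₂, w₂, hp₂, hk₂, hr₂⟩ :=
    redL F (p ^ k) 2 t₂ G₂ ((xS F (p ^ k) - 1) ^ k₆ * p₆) (by rw [hG₂def]; ring) a₂ q₂ hq₂'
  obtain ⟨a₃, q₃, b₀''', hq₃', hd₃⟩ := decompU F (p ^ k) hch 3 (b₀'' + w₂)
  obtain ⟨k₃, p₃, c₃, w₃, hp₃, hk₃, hr₃⟩ :=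
    redL F (p ^ k) 3 t₃ G₃ 0 (by rw [hG₃def]; ring) a₃ q₃ hq₃'
  set G₀ := (xS F (p ^ k) - 1) ^ t₀ + uS F (p ^ k) * (xS F (p ^ k) - 1) ^ k₁ * p₁
      + uS F (p ^ k) ^ 2 * (xS F (p ^ k) - 1) ^ k₂ * p₂
      + uS F (p ^ k) ^ 3 * (xS F (p ^ k) - 1) ^ k₃ * p₃ with hG₀def
  have hG₀eq : A₀ = G₀ + c₁ * G₁ + c₂ * G₂ + c₃ * G₃ := by
    rw [hG₀def]
    have hu1 : uS F (p ^ k) ^ 1 = uS F (p ^ k) := pow_one _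
    linear_combination hb₀ + hd₁ + hr₁ + hd₂ + hr₂ + hd₃ + hr₃ + (b₀''' + w₃) * h4
  have hG₀C : G₀ ∈ C := by
    have : G₀ = A₀ - c₁ * G₁ - c₂ * G₂ - c₃ * G₃ := by linear_combination -hG₀eq
    rw [this]
    exact Ideal.sub_mem _ (Ideal.sub_mem _ (Ideal.sub_mem _ hA₀C
      (Ideal.mul_mem_left _ _ hG₁C)) (Ideal.mul_mem_left _ _ hG₂C))
      (Ideal.mul_mem_left _ _ hG₃C)
  have hμG₀ : muHom F (p ^ k) G₀ = (xQ F (p ^ k) - 1) ^ t₀ := by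
    rw [hG₀def]
    simp only [map_add, map_mul, map_pow, map_sub, map_one, mu_uS, mu_xS, zero_mul, mul_zero,
      add_zero]
    norm_num
  -- conclude
  refine ⟨k₁, k₂, k₃, k₄, k₅, k₆, p₁, p₂, p₃, p₄, p₅, p₆,
    hp₁, hp₂, hp₃, hp₄, hp₅, hp₆, hk₁, hk₂, hk₄, hk₃, hk₅, hk₆, ?_⟩
  have hspan := span_eq F (p ^ k) C t₀ t₁ t₂ t₃ h0 h1 h2 h3 G₀ G₁ G₂ G₃ H₁ H₂
    hG₀C hμG₀ hG₁C hG₁H hμH₁ hG₂C hG₂H hμH₂ hG₃C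
    (by rw [hG₃def, lift_x1pow'])
  rw [hspan, hG₀def, hG₁def, hG₂def, hG₃def]

end
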